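/- Let E be an entire function, Π the canonical product over the zeros of E, P and Q real polynomials with E = Π·e^{P+iQ}. If E is a Bank-Laine function (E(z)=0 ⟹ E'(z)=±1) and all zeros of E are real, then F = Π·e^P satisfies: at every zero z of E, F'(z) = ±1, i.e. F is also a Bank-Laine function. -/

import Mathlib

theorem stmt_19 (E Pi0 F : ℂ → ℂ) (P Q : Polynomial ℝ)
    (hPi : Differentiable ℂ Pi0)
    (hPireal : ∀ x : ℝ, (Pi0 (x : ℂ)).im = 0)
    (hE : ∀ z, E z = Pi0 z *
      Complex.exp ((P.map (algebraMap ℝ ℂ)).eval z + Complex.I * (Q.map (algebraMap ℝ ℂ)).eval z))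
    (hBL : ∀ z, E z = 0 → deriv E z = 1 ∨ deriv E z = -1)
    (hzeros : ∀ z, E z = 0 → z.im = 0)
    (hF : ∀ z, F z = Pi0 z * Complex.exp ((P.map (algebraMap ℝ ℂ)).eval z)) :
    ∀ z, E z = 0 → deriv F z = 1 ∨ deriv F z = -1 := by
  intro z hz
  have hzim := hzeros z hz
  have hzx : z = (z.re : ℂ) := by simp [Complex.ext_iff, hzim]
  set Pc := P.map (algebraMap ℝ ℂ) with hPcdef
  set Qc := Q.map (algebraMap ℝ ℂ) with hQcdef
  have hPiz : Pi0 z = 0 := by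
    have h := hE z
    rw [hz] at h
    rcases mul_eq_zero.mp h.symm with h' | h'
    · exact h'
    · exact absurd h' (Complex.exp_ne_zero _)
  set a := deriv Pi0 z with ha
  have hPi' : HasDerivAt Pi0 a z := (hPi z).hasDerivAt
  -- a is real
  have haim : a.im = 0 := by
    have h2 : HasDerivAt Pi0 a ((z.re : ℝ) : ℂ) := hzx ▸ hPi'
    have hg : HasDerivAt (fun t : ℝ => Pi0 (t : ℂ)) a z.re := h2.comp_ofReal
    have him : HasDerivAt (fun t : ℝ => (Pi0 (t : ℂ)).im) a.im z.re := by
      exact Complex.imCLM.hasFDerivAt.comp_hasDerivAt z.re hg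
    have hconst : (fun t : ℝ => (Pi0 (t : ℂ)).im) = fun _ => (0 : ℝ) := funext hPireal
    have h0 : deriv (fun t : ℝ => (Pi0 (t : ℂ)).im) z.re = 0 := by
      rw [hconst]; simp
    rw [← him.deriv, h0]
  -- eval values are real
  have hPreal : Pc.eval z = ((P.eval z.re : ℝ) : ℂ) := by
    rw [hzx, hPcdef, Polynomial.eval_map]
    simpa using Polynomial.eval₂_at_apply (algebraMap ℝ ℂ) z.re
  have hQreal : Qc.eval z = ((Q.eval z.re : ℝ) : ℂ) := by
    rw [hzx, hQcdef, Polynomial.eval_map]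
    simpa using Polynomial.eval₂_at_apply (algebraMap ℝ ℂ) z.re
  -- derivatives
  have hRd : DifferentiableAt ℂ (fun w => Complex.exp (Pc.eval w + Complex.I * Qc.eval w)) z :=
    (((Pc.differentiableAt).add ((differentiableAt_const _).mul Qc.differentiableAt))).cexp
  have hPd : DifferentiableAt ℂ (fun w => Complex.exp (Pc.eval w)) z :=
    (Pc.differentiableAt).cexp
  have hEeq : E = fun y => Pi0 y * Complex.exp (Pc.eval y + Complex.I * Qc.eval y) := funext hE
  have hFeq : F = fun y => Pi0 y * Complex.exp (Pc.eval y) := funext hF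
  have hdE : deriv E z = a * Complex.exp (Pc.eval z + Complex.I * Qc.eval z) := by
    rw [hEeq, HasDerivAt.deriv (f := fun y => Pi0 y * Complex.exp (Pc.eval y + Complex.I * Qc.eval y)) (hPi'.mul hRd.hasDerivAt), hPiz]
    ring
  have hdF : deriv F z = a * Complex.exp (Pc.eval z) := by
    rw [hFeq, HasDerivAt.deriv (f := fun y => Pi0 y * Complex.exp (Pc.eval y)) (hPi'.mul hPd.hasDerivAt), hPiz]
    ring
  set w := deriv F z with hw
  have hwim : w.im = 0 := by
    rw [hdF, hPreal]
    simp [Complex.mul_im, haim, Complex.exp_ofReal_im]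
  have hwabs : ‖w‖ = 1 := by
    have hdE' : deriv E z = w * Complex.exp (Complex.I * Qc.eval z) := by
      rw [hdE, hdF, Complex.exp_add, mul_assoc]
    have habsE : ‖deriv E z‖ = 1 := by
      rcases hBL z hz with h | h <;> simp [h]
    rw [hdE'] at habsE
    have habs1 : ‖Complex.exp (Complex.I * Qc.eval z)‖ = 1 := by
      rw [Complex.norm_exp, hQreal]
      simp
    rw [norm_mul, habs1, mul_one] at habsE
    exact habsE
  -- conclude
  have hwre : w.re = 1 ∨ w.re = -1 := by
    have : |w.re| = 1 := by
      have := Complex.abs_re_le_norm w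
      have h2 : ‖w‖ = |w.re| := by
        rw [Complex.norm_def, Complex.normSq_apply, hwim]
        simp [Real.sqrt_mul_self_eq_abs]
      rw [← h2, hwabs]
    rcases abs_eq (by norm_num : (0:ℝ) ≤ 1) |>.mp this with h | h
    · exact Or.inl h
    · exact Or.inr h
  have hwc : w = (w.re : ℂ) := by simp [Complex.ext_iff, hwim]
  rcases hwre with h | h
  · left; rw [hwc, h]; norm_num
  · right; rw [hwc, h]; norm_num
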